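/- Let k ≥ 1, let Λ ⊂ ℝᵏ be a lattice (the ℤ-span of an ℝ-basis of ℝᵏ), and let S ⊂ ℝᵏ be a countable set. Let h : ℝᵏ → ℝᵏ be a continuous map such that h(t + τ) − h(t) ∈ S for all t ∈ ℝᵏ and all τ ∈ Λ. Then there exist an ℝ-linear map C : ℝᵏ → ℝᵏ and a continuous map γ : ℝᵏ → ℝᵏ with γ(t + τ) = γ(t) for all t ∈ ℝᵏ, τ ∈ Λ, such that h(t) = C t + γ(t) for all t ∈ ℝᵏ. -/

import Mathlib

/-- A continuous map from `ℝᵏ` into a countable subset of `ℝᵏ` is constant. -/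
lemma const_of_countable {k : ℕ} (g : (Fin k → ℝ) → (Fin k → ℝ))
    (hc : Continuous g) (S : Set (Fin k → ℝ)) (hS : S.Countable)
    (hr : ∀ t, g t ∈ S) : ∀ t, g t = g 0 := by
  intro t
  by_contra hne
  obtain ⟨j, hj⟩ := Function.ne_iff.mp hne
  set f : ℝ → ℝ := fun s => g (s • t) j with hf
  have hfc : Continuous f := (continuous_apply j).comp (hc.comp (continuous_id.smul continuous_const))
  have hf0 : f 0 = g 0 j := by simp [hf]
  have hf1 : f 1 = g t j := by simp [hf]
  have hrange : Set.range f ⊆ (fun v : Fin k → ℝ => v j) '' S := by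
    rintro x ⟨s, rfl⟩
    exact ⟨g (s • t), hr _, rfl⟩
  have himg : ((fun v : Fin k → ℝ => v j) '' S).Countable := hS.image _
  have key : ∀ a b : ℝ, a < b → Set.Icc a b ⊆ Set.range f → False := by
    intro a b hab hsub
    have : (Set.Ioo a b).Countable :=
      (himg.mono hrange).mono ((Set.Ioo_subset_Icc_self).trans hsub)
    rw [← Cardinal.le_aleph0_iff_set_countable, Cardinal.mk_Ioo_real hab] at this
    exact (LE.le.not_gt this) Cardinal.aleph0_lt_continuum
  rcases lt_or_gt_of_ne (hf0 ▸ hf1 ▸ hj.symm) with hlt | hlt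
  · exact key _ _ hlt (intermediate_value_univ 0 1 hfc)
  · exact key _ _ hlt (intermediate_value_univ 1 0 hfc)

/-- **ℝᵏ-component of CR-maps between complex foliated tori.**
If `Λ ⊂ ℝᵏ` is a lattice, `S ⊂ ℝᵏ` is countable, and `h : ℝᵏ → ℝᵏ` is a
continuous map with `h (t + τ) - h t ∈ S` for all `t` and all `τ ∈ Λ`, then
`h t = C t + γ t` with `C` linear and `γ` continuous and `Λ`-periodic. -/
theorem stmt_2 (k : ℕ) (hk : 1 ≤ k)
    (Λ : AddSubgroup (Fin k → ℝ))
    (hΛ : ∃ b : Module.Basis (Fin k) ℝ (Fin k → ℝ), Λ = AddSubgroup.closure (Set.range b))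
    (S : Set (Fin k → ℝ)) (hS : S.Countable)
    (h : (Fin k → ℝ) → (Fin k → ℝ))
    (hcont : Continuous h)
    (hdiff : ∀ (t : Fin k → ℝ), ∀ τ ∈ Λ, h (t + τ) - h t ∈ S) :
    ∃ (C : (Fin k → ℝ) →ₗ[ℝ] (Fin k → ℝ)) (γ : (Fin k → ℝ) → (Fin k → ℝ)),
      Continuous γ ∧
      (∀ (t : Fin k → ℝ), ∀ τ ∈ Λ, γ (t + τ) = γ t) ∧
      ∀ t : Fin k → ℝ, h t = C t + γ t := by
  obtain ⟨b, rfl⟩ := hΛ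
  set c : (Fin k → ℝ) → (Fin k → ℝ) := fun τ => h τ - h 0 with hc
  -- for τ ∈ Λ, the difference is constant in t
  have hconst : ∀ τ ∈ AddSubgroup.closure (Set.range b), ∀ t, h (t + τ) - h t = c τ := by
    intro τ hτ t
    have := const_of_countable (fun t => h (t + τ) - h t)
      ((hcont.comp (continuous_id.add continuous_const)).sub hcont) S hS
      (fun t => hdiff t τ hτ) t
    simpa [hc] using this
  have hcadd : ∀ τ ∈ AddSubgroup.closure (Set.range b),
      ∀ σ ∈ AddSubgroup.closure (Set.range b), c (τ + σ) = c τ + c σ := by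
    intro τ hτ σ hσ
    have h1 : h (σ + τ) - h σ = c τ := hconst τ hτ σ
    have h2 : h σ - h 0 = c σ := rfl
    have : c (τ + σ) = (h (σ + τ) - h σ) + (h σ - h 0) := by
      simp [hc, add_comm τ σ]
    rw [this, h1, h2]
  set C : (Fin k → ℝ) →ₗ[ℝ] (Fin k → ℝ) := b.constr ℝ (fun i => c (b i)) with hC
  have hCc : ∀ τ ∈ AddSubgroup.closure (Set.range b), C τ = c τ := by
    intro τ hτ
    induction hτ using AddSubgroup.closure_induction with
    | mem x hx =>
        obtain ⟨i, rfl⟩ := hx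
        simpa [hC] using b.constr_basis ℝ (fun i => c (b i)) i
    | zero => simp [hc]
    | add x y hx hy ihx ihy =>
        rw [map_add, ihx, ihy, hcadd x hx y hy]
    | neg x hx ihx =>
        have hx' : -x ∈ AddSubgroup.closure (Set.range b) := neg_mem hx
        have h0 : c (x + -x) = c x + c (-x) := hcadd x hx (-x) hx'
        simp only [add_neg_cancel] at h0
        have hc0 : c (0 : Fin k → ℝ) = 0 := by simp [hc]
        rw [map_neg, ihx]
        have hsum : c x + c (-x) = 0 := by rw [← h0, hc0]
        rw [eq_neg_of_add_eq_zero_right hsum]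
  refine ⟨C, fun t => h t - C t, hcont.sub C.continuous_of_finiteDimensional, ?_, ?_⟩
  · intro t τ hτ
    have h1 : h (t + τ) - h t = c τ := hconst τ hτ t
    have h2 : C τ = c τ := hCc τ hτ
    have : h (t + τ) = h t + c τ := by rw [← h1]; abel
    show h (t + τ) - C (t + τ) = h t - C t
    rw [this, map_add, h2]
    abel
  · intro t; module
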